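/- Let (Γ, S) be a Thue system with rules S₁, …, S_m, each rule consisting of two words of length exactly 2, and such that for every rule {a₁a₂, b₁b₂} ∈ S either a₁ = b₁ or a₂ = b₂. Let ⊢, ⊣, x₁, …, x_m and a blank symbol □ be distinct symbols not in Γ, let Δ₁ = {⊢, ⊣, x₁, …, x_m}, Δ₂ = (Γ ∪ {□}) × (Γ ∪ {□}), and Δ = Δ₁ ∪ Δ₂. Let E ⊆ Δ × Δ consist exactly of: (i) ((a, b), (b, c)) for all a, c ∈ Γ ∪ {□} and b ∈ Γ; (ii) (⊢, (□, a)) for all a ∈ Γ; (iii) ((a, □), ⊣) for all a ∈ Γ; and (iv) for each i with S_i = {a₁a₂, b₁b₂}: ((c, a₁), x_i), ((c, b₁), x_i), (x_i, (a₂, c)) and (x_i, (b₂, c)) for all c ∈ Γ ∪ {□}. For a word a₁a₂…a_n ∈ Γⁿ (n ≥ 1), define ψ(a₁…a_n) = ⊢ (□, a₁)(a₁, a₂)(a₂, a₃)…(a_{n−1}, a_n)(a_n, □) ⊣ ∈ Δ^{n+3}. Then for all s, t ∈ Γⁿ: s ⇔*_S t if and only if there exists a sequence ψ(s) = u⁰,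 u¹, …, u^l = ψ(t) of H-words over H = (Δ, E), each of length n + 3, in which each u^j differs from u^{j−1} in exactly one position. -/

import Mathlib

/-- The alphabet `Δ`: the special symbols `⊢` (`left`), `⊣` (`right`),
`x₁, …, x_m`, together with the pair symbols `(Γ ∪ {□}) × (Γ ∪ {□})`
(`□` is encoded by `none`). -/
inductive Delta (Γ : Type) (m : ℕ) : Type
  | left : Delta Γ m
  | right : Delta Γ m
  | x : Fin m → Delta Γ m
  | pair : Option Γ → Option Γ → Delta Γ m

/-- The relation `E ⊆ Δ × Δ` built from the rules `Rule i = {a₁a₂, b₁b₂}`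
(each rule is a pair of words of length two, stored as
`((a₁, a₂), (b₁, b₂))`). -/
def ERel {Γ : Type} {m : ℕ} (Rule : Fin m → (Γ × Γ) × (Γ × Γ)) :
    Delta Γ m → Delta Γ m → Prop := fun p q =>
  (∃ (a : Option Γ) (b : Γ) (c : Option Γ),
      p = Delta.pair a (some b) ∧ q = Delta.pair (some b) c) ∨
  (∃ b : Γ, p = Delta.left ∧ q = Delta.pair none (some b)) ∨
  (∃ b : Γ, p = Delta.pair (some b) none ∧ q = Delta.right) ∨
  (∃ (i : Fin m) (c : Option Γ),
      (q = Delta.x i ∧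
        (p = Delta.pair c (some (Rule i).1.1) ∨ p = Delta.pair c (some (Rule i).2.1))) ∨
      (p = Delta.x i ∧
        (q = Delta.pair (some (Rule i).1.2) c ∨ q = Delta.pair (some (Rule i).2.2) c)))

/-- `ψ(a₁…a_n) = ⊢ (□,a₁)(a₁,a₂)…(a_{n−1},a_n)(a_n,□) ⊣`. -/
def psi {Γ : Type} (m : ℕ) (s : List Γ) : List (Delta Γ m) :=
  Delta.left ::
    ((List.zip ((none : Option Γ) :: s.map some) (s.map some ++ [none])).map
      fun p => Delta.pair p.1 p.2) ++ [Delta.right]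

/-- One rewriting step of the Thue system whose rules are the unordered pairs
`{(Rule i).1, (Rule i).2}` of words of length two. -/
def SStep {Γ : Type} {m : ℕ} (Rule : Fin m → (Γ × Γ) × (Γ × Γ)) (s t : List Γ) : Prop :=
  ∃ (i : Fin m) (u v : List Γ),
    (s = u ++ [(Rule i).1.1, (Rule i).1.2] ++ v ∧
      t = u ++ [(Rule i).2.1, (Rule i).2.2] ++ v) ∨
    (s = u ++ [(Rule i).2.1, (Rule i).2.2] ++ v ∧
      t = u ++ [(Rule i).1.1, (Rule i).1.2] ++ v)

/-- Two lists differ in exactly one position. -/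
def DiffOne {α : Type} (l₁ l₂ : List α) : Prop :=
  ∃ (u v : List α) (a b : α), a ≠ b ∧ l₁ = u ++ a :: v ∧ l₂ = u ++ b :: v

namespace Stmt11

variable {Γ : Type} {m : ℕ}

/-- letter at (1-based) position `k` of the padded word `□ v □ □ …`. -/
def lett (v : List Γ) (k : ℕ) : Option Γ := if k = 0 then none else v[k-1]?

@[simp] lemma lett_zero (v : List Γ) : lett v 0 = none := rfl

lemma lett_pos (v : List Γ) {k : ℕ} (h : 0 < k) : lett v k = v[k-1]? := if_neg (by omega)

lemma lett_of_gt (v : List Γ) {k : ℕ} (h : v.length < k) : lett v k = none := by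
  rw [lett_pos _ (by omega), List.getElem?_eq_none]; omega

lemma lett_eq_some (v : List Γ) {k : ℕ} (h1 : 1 ≤ k) (h2 : k ≤ v.length) :
    ∃ γ, lett v k = some γ := by
  rw [lett_pos _ h1]
  exact ⟨v[k-1], List.getElem?_eq_getElem (by omega)⟩

lemma lett_set (v : List Γ) (j : ℕ) (hj : j < v.length) (a : Γ) (k : ℕ) :
    lett (v.set j a) k = if j + 1 = k then some a else lett v k := by
  rcases Nat.eq_zero_or_pos k with rfl | hk
  · rw [if_neg (by omega)]; rfl
  · rw [lett_pos _ hk, lett_pos _ hk, List.getElem?_set]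
    by_cases h : j + 1 = k
    · rw [if_pos (by omega), if_pos hj, if_pos h]
    · rw [if_neg (by omega), if_neg h]

variable (Rule : Fin m → (Γ × Γ) × (Γ × Γ))

def Sides (i : Fin m) (p q : Option Γ) : Prop :=
  (p = some (Rule i).1.1 ∧ q = some (Rule i).1.2) ∨
  (p = some (Rule i).2.1 ∧ q = some (Rule i).2.2)

lemma Sides.fst_mem {i p q} (h : Sides Rule i p q) :
    p = some (Rule i).1.1 ∨ p = some (Rule i).2.1 := h.imp And.left And.left

lemma Sides.snd_mem {i p q} (h : Sides Rule i p q) :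
    q = some (Rule i).1.2 ∨ q = some (Rule i).2.2 := h.imp And.right And.right

lemma Sides.fst_some {i p q} (h : Sides Rule i p q) : ∃ γ, p = some γ := by
  rcases h.fst_mem Rule with h | h <;> exact ⟨_, h⟩

lemma Sides.snd_some {i p q} (h : Sides Rule i p q) : ∃ γ, q = some γ := by
  rcases h.snd_mem Rule with h | h <;> exact ⟨_, h⟩

lemma sides_of_mem (hrule : ∀ i, (Rule i).1.1 = (Rule i).2.1 ∨ (Rule i).1.2 = (Rule i).2.2)
    {i : Fin m} {p q : Option Γ}
    (hp : p = some (Rule i).1.1 ∨ p = some (Rule i).2.1)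
    (hq : q = some (Rule i).1.2 ∨ q = some (Rule i).2.2) :
    Sides Rule i p q := by
  rcases hrule i with h | h
  · rcases hq with hq | hq
    · exact Or.inl ⟨by rcases hp with hp | hp <;> simp [hp, h], hq⟩
    · exact Or.inr ⟨by rcases hp with hp | hp <;> simp [hp, h], hq⟩
  · rcases hp with hp | hp
    · exact Or.inl ⟨hp, by rcases hq with hq | hq <;> simp [hq, h]⟩
    · exact Or.inr ⟨hp, by rcases hq with hq | hq <;> simp [hq, h]⟩

def Inv (v : List Γ) (u : List (Delta Γ m)) : Prop :=
  u.length = v.length + 3 ∧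
  u[0]? = some Delta.left ∧
  u[v.length + 2]? = some Delta.right ∧
  ∀ k, 1 ≤ k → k ≤ v.length + 1 →
    u[k]? = some (Delta.pair (lett v (k-1)) (lett v k)) ∨
    ∃ i, u[k]? = some (Delta.x i) ∧ Sides Rule i (lett v (k-1)) (lett v k)

lemma psi_length (s : List Γ) : (psi (Γ := Γ) m s).length = s.length + 3 := by
  simp [psi]

lemma psi_getElem? (s : List Γ) (k : ℕ) :
    (psi (Γ := Γ) m s)[k]? =
      if k = 0 then some Delta.left
      else if k ≤ s.length + 1 then some (Delta.pair (lett s (k-1)) (lett s k))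
      else if k = s.length + 2 then some Delta.right
      else none := by
  have hz : ∀ j : ℕ, ((none : Option Γ) :: s.map some)[j]? =
      if j ≤ s.length then some (lett s j) else none := by
    intro j
    cases j with
    | zero => simp
    | succ j =>
      simp only [List.getElem?_cons_succ, List.getElem?_map]
      rcases lt_or_ge j s.length with h | h
      · rw [if_pos (by omega), lett_pos _ (Nat.succ_pos j)]
        simp [List.getElem?_eq_getElem h]
      · rw [if_neg (by omega), List.getElem?_eq_none h]; rfl
  have hz2 : ∀ j : ℕ, ((s.map some) ++ [(none : Option Γ)])[j]? =
      if j ≤ s.length then some (lett s (j+1)) else none := by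
    intro j
    rw [List.getElem?_append]
    rcases lt_or_ge j s.length with h | h
    · rw [if_pos (by simpa), if_pos (by omega), List.getElem?_map,
        lett_pos _ (Nat.succ_pos j)]
      simp [List.getElem?_eq_getElem h]
    · rcases eq_or_lt_of_le h with rfl | h'
      · rw [if_neg (by simp), if_pos le_rfl, lett_of_gt _ (by omega)]
        simp
      · rw [if_neg (by simp; omega), if_neg (by omega), List.getElem?_eq_none (by simp; omega)]
  set L := ((List.zip ((none : Option Γ) :: s.map some) (s.map some ++ [none])).map
      fun p => Delta.pair (m := m) p.1 p.2) with hLdef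
  have hLlen : L.length = s.length + 1 := by simp [hLdef]
  have hLget : ∀ j, L[j]? = if j ≤ s.length
      then some (Delta.pair (lett s j) (lett s (j+1))) else none := by
    intro j
    rw [hLdef, List.getElem?_map, List.zip, List.getElem?_zipWith, hz j, hz2 j]
    rcases lt_or_ge s.length j with h | h
    · rw [if_neg (by omega), if_neg (by omega), if_neg (by omega)]; rfl
    · rw [if_pos h, if_pos h, if_pos h]; rfl
  have hpsi : psi (Γ := Γ) m s = Delta.left :: (L ++ [Delta.right]) := by
    simp [psi, hLdef]
  rw [hpsi]
  cases k with
  | zero => simp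
  | succ k =>
    rw [List.getElem?_cons_succ, List.getElem?_append, hLlen]
    rcases lt_or_ge k (s.length + 1) with h | h
    · rw [if_pos h, hLget k, if_pos (by omega), if_neg (by omega), if_pos (by omega)]
      simp
    · rw [if_neg (by omega), if_neg (by omega), if_neg (by omega)]
      rcases eq_or_lt_of_le h with h' | h'
      · rw [if_pos (by omega)]
        have : k - (s.length + 1) = 0 := by omega
        rw [this]; rfl
      · rw [if_neg (by omega), List.getElem?_eq_none]
        simp; omega

lemma inv_psi (s : List Γ) : Inv Rule s (psi m s) := by
  refine ⟨psi_length s, ?_, ?_, ?_⟩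
  · rw [psi_getElem?]; simp
  · rw [psi_getElem?]; rw [if_neg (by omega), if_neg (by omega), if_pos rfl]
  · intro k h1 h2
    left
    rw [psi_getElem?, if_neg (by omega), if_pos h2]

lemma inv_psi_unique {v t : List Γ} (h : Inv Rule v (psi m t)) : v = t := by
  obtain ⟨hlen, -, -, hmid⟩ := h
  rw [psi_length] at hlen
  have hl : v.length = t.length := by omega
  apply List.ext_getElem?
  intro j
  rcases lt_or_ge j v.length with hj | hj
  · have := hmid (j+1) (by omega) (by omega)
    rw [psi_getElem?, if_neg (by omega), if_pos (by omega)] at this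
    rcases this with h | ⟨i, h, -⟩
    · have h2 := Option.some.inj h
      injection h2 with h3 h4
      rw [lett_pos _ (by omega), lett_pos _ (by omega)] at h4
      simpa using h4.symm
    · exact absurd (Option.some.inj h) (by simp)
  · rw [List.getElem?_eq_none hj, List.getElem?_eq_none (by omega)]


lemma lt_of_getElem? {α : Type} {l : List α} {k : ℕ} {a : α} (h : l[k]? = some a) :
    k < l.length := by
  by_contra hc
  rw [List.getElem?_eq_none (by omega)] at h
  exact nomatch h

lemma chain'_getElem? {α : Type} {R : α → α → Prop} {l : List α} (h : List.Chain' R l)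
    {k : ℕ} {a b : α} (ha : l[k]? = some a) (hb : l[k+1]? = some b) : R a b := by
  have hk : k + 1 < l.length := lt_of_getElem? hb
  have h2 := List.isChain_iff_getElem.mp h k (by omega)
  rw [List.getElem?_eq_getElem (by omega)] at ha
  rw [List.getElem?_eq_getElem hk] at hb
  obtain rfl := Option.some.inj ha
  obtain rfl := Option.some.inj hb
  simpa using h2

lemma chain'_of_getElem? {α : Type} {R : α → α → Prop} {l : List α}
    (h : ∀ k a b, l[k]? = some a → l[k+1]? = some b → R a b) : List.Chain' R l := by
  refine List.isChain_iff_getElem.mpr ?_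
  intro i hi
  exact h i _ _ (List.getElem?_eq_getElem (by omega)) (List.getElem?_eq_getElem (by omega))

lemma diffOne_elim {α : Type} {l₁ l₂ : List α} (h : DiffOne l₁ l₂) :
    ∃ k a b, a ≠ b ∧ k < l₁.length ∧ l₂.length = l₁.length ∧ l₁[k]? = some a ∧
      l₂[k]? = some b ∧ ∀ j, j ≠ k → l₁[j]? = l₂[j]? := by
  obtain ⟨u, v, a, b, hab, rfl, rfl⟩ := h
  refine ⟨u.length, a, b, hab, by simp, by simp, ?_, ?_, ?_⟩
  · rw [List.getElem?_append, if_neg (lt_irrefl _), Nat.sub_self, List.getElem?_cons_zero]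
  · rw [List.getElem?_append, if_neg (lt_irrefl _), Nat.sub_self, List.getElem?_cons_zero]
  · intro j hj
    rw [List.getElem?_append, List.getElem?_append]
    split
    · rfl
    · have : j - u.length ≠ 0 := by omega
      obtain ⟨j', hj'⟩ := Nat.exists_eq_succ_of_ne_zero this
      rw [hj', List.getElem?_cons_succ, List.getElem?_cons_succ]

lemma diffOne_set {α : Type} {l : List α} {k : ℕ} {a b : α}
    (hk : l[k]? = some a) (hab : a ≠ b) : DiffOne l (l.set k b) := by
  have hlt : k < l.length := lt_of_getElem? hk
  have ha : a = l[k] := by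
    rw [List.getElem?_eq_getElem hlt] at hk
    exact (Option.some.inj hk).symm
  refine ⟨l.take k, l.drop (k+1), a, b, hab, ?_, List.set_eq_take_cons_drop b hlt⟩
  conv_lhs => rw [← List.take_append_drop k l, List.drop_eq_getElem_cons hlt]
  rw [ha]

lemma set_getElem?_self {α : Type} {l : List α} {k : ℕ} {a : α} (h : l[k]? = some a) :
    l.set k a = l := by
  apply List.ext_getElem?
  intro j
  rw [List.getElem?_set]
  split
  · subst j
    rw [if_pos (lt_of_getElem? h), h]
  · rfl

lemma eq_take_cons_cons_drop {α : Type} {w : List α} {j : ℕ} {c d : α}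
    (hc : w[j]? = some c) (hd : w[j+1]? = some d) :
    w = w.take j ++ [c, d] ++ w.drop (j+2) := by
  have h1 : j + 1 < w.length := lt_of_getElem? hd
  have hc' : c = w[j] := by
    rw [List.getElem?_eq_getElem (by omega)] at hc; exact (Option.some.inj hc).symm
  have hd' : d = w[j+1] := by
    rw [List.getElem?_eq_getElem h1] at hd; exact (Option.some.inj hd).symm
  conv_lhs => rw [← List.take_append_drop j w, List.drop_eq_getElem_cons (by omega : j < w.length),
    List.drop_eq_getElem_cons h1]
  rw [hc', hd']
  simp

lemma set_set_eq {α : Type} {w : List α} {j : ℕ} (h : j + 1 < w.length) (e f : α) :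
    (w.set j e).set (j+1) f = w.take j ++ [e, f] ++ w.drop (j+2) := by
  have h1 : ((w.set j e).set (j+1) f)[j]? = some e := by
    rw [List.getElem?_set, if_neg (by omega), List.getElem?_set, if_pos rfl,
      if_pos (by omega)]
  have h2 : ((w.set j e).set (j+1) f)[j+1]? = some f := by
    rw [List.getElem?_set, if_pos rfl, if_pos (by simpa using h)]
  have ht : ((w.set j e).set (j+1) f).take j = w.take j := by
    apply List.ext_getElem?
    intro r
    rw [List.getElem?_take, List.getElem?_take]
    split
    · rw [List.getElem?_set, if_neg (by omega), List.getElem?_set, if_neg (by omega)]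
    · rfl
  have hdr : ((w.set j e).set (j+1) f).drop (j+2) = w.drop (j+2) := by
    apply List.ext_getElem?
    intro r
    rw [List.getElem?_drop, List.getElem?_drop, List.getElem?_set, if_neg (by omega),
      List.getElem?_set, if_neg (by omega)]
  conv_lhs => rw [eq_take_cons_cons_drop h1 h2]
  rw [ht, hdr]


section ERelLemmas
variable {Rule : Fin m → (Γ × Γ) × (Γ × Γ)}

lemma not_erel_into_left {p : Delta Γ m} : ¬ ERel Rule p Delta.left := by
  rintro (⟨a,b,c,h1,h2⟩|⟨b,h1,h2⟩|⟨b,h1,h2⟩|⟨i,c,⟨h1,h2⟩|⟨h1,h2⟩⟩) <;> simp_all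

lemma not_erel_out_right {q : Delta Γ m} : ¬ ERel Rule Delta.right q := by
  rintro (⟨a,b,c,h1,h2⟩|⟨b,h1,h2⟩|⟨b,h1,h2⟩|⟨i,c,⟨h1,h2⟩|⟨h1,h2⟩⟩) <;> simp_all

lemma erel_into_pair {p : Delta Γ m} {c d : Option Γ} (h : ERel Rule p (Delta.pair c d)) :
    (p = Delta.left ∧ c = none ∧ ∃ γ : Γ, d = some γ) ∨
    (∃ (e : Option Γ) (γ : Γ), c = some γ ∧ p = Delta.pair e (some γ)) ∨
    (∃ i, p = Delta.x i ∧ (c = some (Rule i).1.2 ∨ c = some (Rule i).2.2)) := by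
  rcases h with ⟨a,b,c',h1,h2⟩|⟨b,h1,h2⟩|⟨b,h1,h2⟩|⟨i,c',⟨h1,h2⟩|⟨h1,h2⟩⟩
  · injection h2 with hc hd
    exact Or.inr (Or.inl ⟨a, b, hc, h1⟩)
  · injection h2 with hc hd
    exact Or.inl ⟨h1, hc, b, hd⟩
  · exact absurd h2 (by simp)
  · exact absurd h1 (by simp)
  · refine Or.inr (Or.inr ⟨i, h1, ?_⟩)
    rcases h2 with h2 | h2
    · injection h2 with hc hd; exact Or.inl hc
    · injection h2 with hc hd; exact Or.inr hc

lemma erel_out_pair {q : Delta Γ m} {c d : Option Γ} (h : ERel Rule (Delta.pair c d) q) :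
    (q = Delta.right ∧ d = none ∧ ∃ γ : Γ, c = some γ) ∨
    (∃ (e : Option Γ) (γ : Γ), d = some γ ∧ q = Delta.pair (some γ) e) ∨
    (∃ i, q = Delta.x i ∧ (d = some (Rule i).1.1 ∨ d = some (Rule i).2.1)) := by
  rcases h with ⟨a,b,c',h1,h2⟩|⟨b,h1,h2⟩|⟨b,h1,h2⟩|⟨i,c',⟨h1,h2⟩|⟨h1,h2⟩⟩
  · injection h1 with hc hd
    exact Or.inr (Or.inl ⟨c', b, hd, h2⟩)
  · exact absurd h1 (by simp)
  · injection h1 with hc hd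
    exact Or.inl ⟨h2, hd, b, hc⟩
  · refine Or.inr (Or.inr ⟨i, h1, ?_⟩)
    rcases h2 with h2 | h2
    · injection h2 with hc hd; exact Or.inl hd
    · injection h2 with hc hd; exact Or.inr hd
  · exact absurd h1 (by simp)

lemma erel_into_x {p : Delta Γ m} {i : Fin m} (h : ERel Rule p (Delta.x i)) :
    ∃ c, (p = Delta.pair c (some (Rule i).1.1) ∨ p = Delta.pair c (some (Rule i).2.1)) := by
  rcases h with ⟨a,b,c',h1,h2⟩|⟨b,h1,h2⟩|⟨b,h1,h2⟩|⟨i',c',⟨h1,h2⟩|⟨h1,h2⟩⟩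
  · exact absurd h2 (by simp)
  · exact absurd h2 (by simp)
  · exact absurd h2 (by simp)
  · injection h1 with hi
    subst hi
    exact ⟨c', h2⟩
  · exact absurd h2 (by simp)

lemma erel_out_x {q : Delta Γ m} {i : Fin m} (h : ERel Rule (Delta.x i) q) :
    ∃ c, (q = Delta.pair (some (Rule i).1.2) c ∨ q = Delta.pair (some (Rule i).2.2) c) := by
  rcases h with ⟨a,b,c',h1,h2⟩|⟨b,h1,h2⟩|⟨b,h1,h2⟩|⟨i',c',⟨h1,h2⟩|⟨h1,h2⟩⟩
  · exact absurd h1 (by simp)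
  · exact absurd h1 (by simp)
  · exact absurd h1 (by simp)
  · exact absurd h2 (by simp)
  · injection h1 with hi
    subst hi
    exact ⟨c', h2⟩

end ERelLemmas

lemma sstep_of_sides {Rule : Fin m → (Γ × Γ) × (Γ × Γ)} {i : Fin m} {w : List Γ} {j : ℕ}
    {c d e f : Γ}
    (hc : w[j]? = some c) (hd : w[j+1]? = some d)
    (h1 : Sides Rule i (some c) (some d)) (h2 : Sides Rule i (some e) (some f))
    (hne : ¬ (c = e ∧ d = f)) :
    SStep Rule w ((w.set j e).set (j+1) f) := by
  have hj : j + 1 < w.length := lt_of_getElem? hd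
  have hw : w = w.take j ++ [c, d] ++ w.drop (j+2) := eq_take_cons_cons_drop hc hd
  have hw' : (w.set j e).set (j+1) f = w.take j ++ [e, f] ++ w.drop (j+2) := set_set_eq hj e f
  rcases h1 with ⟨hc1, hd1⟩ | ⟨hc1, hd1⟩ <;> rcases h2 with ⟨he1, hf1⟩ | ⟨he1, hf1⟩
  · exact absurd ⟨by rw [Option.some.inj hc1, Option.some.inj he1],
      by rw [Option.some.inj hd1, Option.some.inj hf1]⟩ hne
  · refine ⟨i, w.take j, w.drop (j+2), Or.inl ⟨?_, ?_⟩⟩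
    · rw [← Option.some.inj hc1, ← Option.some.inj hd1]; exact hw
    · rw [← Option.some.inj he1, ← Option.some.inj hf1]; exact hw'
  · refine ⟨i, w.take j, w.drop (j+2), Or.inr ⟨?_, ?_⟩⟩
    · rw [← Option.some.inj hc1, ← Option.some.inj hd1]; exact hw
    · rw [← Option.some.inj he1, ← Option.some.inj hf1]; exact hw'
  · exact absurd ⟨by rw [Option.some.inj hc1, Option.some.inj he1],
      by rw [Option.some.inj hd1, Option.some.inj hf1]⟩ hne

lemma lett_some_bounds {v : List Γ} {k : ℕ} {γ : Γ} (h : lett v k = some γ) :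
    1 ≤ k ∧ k ≤ v.length := by
  constructor
  · rcases Nat.eq_zero_or_pos k with rfl | hk
    · exact absurd h (by simp)
    · omega
  · by_contra hc
    rw [lett_of_gt v (by omega)] at h
    exact nomatch h

lemma eq_psi_of {t : List Γ} {w : List (Delta Γ m)} (hlen : w.length = t.length + 3)
    (h0 : w[0]? = some Delta.left) (hl : w[t.length+2]? = some Delta.right)
    (hmid : ∀ k, 1 ≤ k → k ≤ t.length+1 →
      w[k]? = some (Delta.pair (lett t (k-1)) (lett t k))) : w = psi m t := by
  apply List.ext_getElem?
  intro j
  rw [psi_getElem?]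
  rcases Nat.eq_zero_or_pos j with rfl | hj
  · rw [if_pos rfl]; exact h0
  rcases le_or_gt j (t.length + 1) with h1 | h1
  · rw [if_neg (by omega), if_pos h1]; exact hmid j hj h1
  rcases eq_or_lt_of_le (show t.length + 1 + 1 ≤ j by omega) with h2 | h2
  · rw [if_neg (by omega), if_neg (by omega), if_pos (by omega)]
    obtain rfl : j = t.length + 2 := by omega
    exact hl
  · rw [if_neg (by omega), if_neg (by omega), if_neg (by omega), List.getElem?_eq_none]
    omega


lemma chain'_of_inv {Rule : Fin m → (Γ × Γ) × (Γ × Γ)} {v : List Γ} {u : List (Delta Γ m)}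
    (hn : 1 ≤ v.length) (hInv : Inv Rule v u)
    (hx : ∀ k i i', u[k]? = some (Delta.x i) → u[k+1]? = some (Delta.x i') → False) :
    List.Chain' (ERel Rule) u := by
  obtain ⟨hul, hu0, hulast, hmid⟩ := hInv
  apply chain'_of_getElem?
  intro k a b ha hb
  have hk : k + 1 < u.length := lt_of_getElem? hb
  rcases Nat.eq_zero_or_pos k with rfl | hk0
  · -- a = left, b at position 1
    rw [hu0] at ha
    obtain rfl := Option.some.inj ha
    obtain ⟨γ, hγ⟩ := lett_eq_some v le_rfl hn
    rcases hmid 1 le_rfl (by omega) with h | ⟨i, h, hS⟩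
    · rw [h] at hb
      obtain rfl := Option.some.inj hb
      exact Or.inr (Or.inl ⟨γ, rfl, by rw [lett_zero, hγ]⟩)
    · obtain ⟨δ, hδ⟩ := hS.fst_some Rule
      rw [lett_zero] at hδ
      exact nomatch hδ
  rcases le_or_gt k v.length with hkn | hkn
  · -- middle
    obtain ⟨γ, hγ⟩ := lett_eq_some v hk0 hkn
    rcases hmid k hk0 (by omega) with h | ⟨i, h, hS⟩ <;>
      rcases hmid (k+1) (by omega) (by omega) with h' | ⟨i', h', hS'⟩
    · rw [h] at ha; rw [h'] at hb
      obtain rfl := Option.some.inj ha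
      obtain rfl := Option.some.inj hb
      refine Or.inl ⟨lett v (k-1), γ, lett v (k+1), by rw [hγ], ?_⟩
      rw [Nat.add_sub_cancel, hγ]
    · rw [h] at ha; rw [h'] at hb
      obtain rfl := Option.some.inj ha
      obtain rfl := Option.some.inj hb
      rw [Nat.add_sub_cancel] at hS'
      refine Or.inr (Or.inr (Or.inr ⟨i', lett v (k-1), Or.inl ⟨rfl, ?_⟩⟩))
      rcases hS'.fst_mem Rule with hm | hm <;> [left; right] <;> rw [← hm]
    · rw [h] at ha; rw [h'] at hb
      obtain rfl := Option.some.inj ha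
      obtain rfl := Option.some.inj hb
      refine Or.inr (Or.inr (Or.inr ⟨i, lett v (k+1), Or.inr ⟨rfl, ?_⟩⟩))
      rcases hS.snd_mem Rule with hm | hm <;> [left; right] <;>
        rw [Nat.add_sub_cancel, ← hm]
    · exact absurd (hx k i i' h h') id
  · -- k = v.length + 1
    have hk1 : k = v.length + 1 := by omega
    subst hk1
    obtain ⟨γ, hγ⟩ := lett_eq_some v hn le_rfl
    rw [show v.length + 1 + 1 = v.length + 2 from rfl, hulast] at hb
    obtain rfl := Option.some.inj hb
    rcases hmid (v.length+1) (by omega) (by omega) with h | ⟨i, h, hS⟩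
    · rw [h] at ha
      obtain rfl := Option.some.inj ha
      refine Or.inr (Or.inr (Or.inl ⟨γ, ?_, rfl⟩))
      rw [Nat.add_sub_cancel, hγ, lett_of_gt v (by omega)]
    · obtain ⟨δ, hδ⟩ := hS.snd_some Rule
      rw [lett_of_gt v (by omega)] at hδ
      exact nomatch hδ

lemma psi_no_x {s : List Γ} {k : ℕ} {i : Fin m} :
    (psi m s)[k]? = some (Delta.x i) → False := by
  intro h
  rw [psi_getElem?] at h
  split at h <;> [skip; split at h] <;> [simp at h; skip; split at h] <;> simp at h


lemma getElem?_two {α : Type} (U V : List α) (a₁ a₂ : α) (r : ℕ) :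
    (U ++ [a₁, a₂] ++ V)[r]? =
      if r < U.length then U[r]? else if r = U.length then some a₁
      else if r = U.length + 1 then some a₂ else V[r - (U.length + 2)]? := by
  rw [List.getElem?_append]
  have hL : (U ++ [a₁, a₂]).length = U.length + 2 := by simp
  rcases lt_or_ge r U.length with h | h
  · rw [if_pos (by omega), List.getElem?_append, if_pos h, if_pos h]
  rcases eq_or_lt_of_le h with rfl | h1
  · rw [if_pos (by omega), List.getElem?_append, if_neg (by omega), Nat.sub_self,
      if_neg (by omega), if_pos rfl]
    rfl
  rcases eq_or_lt_of_le (show U.length + 1 ≤ r by omega) with h2 | h2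
  · rw [if_pos (by omega), List.getElem?_append, if_neg (by omega)]
    have : r - U.length = 1 := by omega
    rw [this, if_neg (by omega), if_neg (by omega), if_pos h2.symm]
    rfl
  · rw [if_neg (by omega), if_neg (by omega), if_neg (by omega), if_neg (by omega), hL]

lemma lett_two_eq₁ {U V : List Γ} {a₁ a₂ : Γ} :
    lett (U ++ [a₁, a₂] ++ V) (U.length + 1) = some a₁ := by
  rw [lett_pos _ (by omega), Nat.add_sub_cancel, getElem?_two, if_neg (lt_irrefl _),
    if_pos rfl]

lemma lett_two_eq₂ {U V : List Γ} {a₁ a₂ : Γ} :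
    lett (U ++ [a₁, a₂] ++ V) (U.length + 2) = some a₂ := by
  rw [lett_pos _ (by omega)]
  have : U.length + 2 - 1 = U.length + 1 := by omega
  rw [this, getElem?_two, if_neg (by omega), if_neg (by omega), if_pos rfl]

lemma lett_two_ne {U V : List Γ} {a₁ a₂ b₁ b₂ : Γ} {r : ℕ}
    (h1 : r ≠ U.length + 1) (h2 : r ≠ U.length + 2) :
    lett (U ++ [a₁, a₂] ++ V) r = lett (U ++ [b₁, b₂] ++ V) r := by
  rcases Nat.eq_zero_or_pos r with rfl | hr
  · rfl
  rw [lett_pos _ hr, lett_pos _ hr, getElem?_two, getElem?_two]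
  rcases lt_or_ge (r-1) U.length with h | h
  · rw [if_pos h, if_pos h]
  · rw [if_neg (by omega), if_neg (by omega), if_neg (by omega), if_neg (by omega),
      if_neg (by omega), if_neg (by omega)]

lemma chain'_psi {Rule : Fin m → (Γ × Γ) × (Γ × Γ)} {s : List Γ} (hn : 1 ≤ s.length) :
    List.Chain' (ERel Rule) (psi m s) :=
  chain'_of_inv hn (inv_psi Rule s) (fun _ _ _ h _ => psi_no_x h)


lemma forward_core_A {Rule : Fin m → (Γ × Γ) × (Γ × Γ)} {i : Fin m}
    (U V : List Γ) (a₁ a₂ b₂ : Γ)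
    (hS1 : Sides Rule i (some a₁) (some a₂)) (hS2 : Sides Rule i (some a₁) (some b₂))
    (hne : a₂ ≠ b₂) :
    ∃ (l : ℕ) (u : ℕ → List (Delta Γ m)),
      u 0 = psi m (U ++ [a₁, a₂] ++ V) ∧ u l = psi m (U ++ [a₁, b₂] ++ V) ∧
      (∀ q ≤ l, (u q).length = (U ++ [a₁, a₂] ++ V).length + 3 ∧
        List.Chain' (ERel Rule) (u q)) ∧
      (∀ q < l, DiffOne (u q) (u (q + 1))) := by
  set s := U ++ [a₁, a₂] ++ V with hsdef
  set t := U ++ [a₁, b₂] ++ V with htdef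
  have hslen : s.length = U.length + 2 + V.length := by
    simp only [hsdef, List.length_append, List.length_cons, List.length_nil]
  have htlen : t.length = s.length := by
    simp only [hsdef, htdef, List.length_append, List.length_cons, List.length_nil]
  have hn : 1 ≤ s.length := by omega
  have e2 : U.length + 2 - 1 = U.length + 1 := by omega
  have e3 : U.length + 3 - 1 = U.length + 2 := by omega
  have hs1 : lett s (U.length + 1) = some a₁ := lett_two_eq₁
  have hs2 : lett s (U.length + 2) = some a₂ := lett_two_eq₂
  have ht1 : lett t (U.length + 1) = some a₁ := lett_two_eq₁
  have ht2 : lett t (U.length + 2) = some b₂ := lett_two_eq₂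
  have hst : ∀ r, r ≠ U.length + 2 → lett s r = lett t r := by
    intro r hr
    rcases eq_or_ne r (U.length + 1) with rfl | hr1
    · rw [hs1, ht1]
    · exact lett_two_ne hr1 hr
  set w₀ := psi (Γ := Γ) m s with hw0
  have hw0len : w₀.length = s.length + 3 := psi_length s
  set w₁ := w₀.set (U.length + 2) (Delta.x i) with hw1def
  have hw1len : w₁.length = s.length + 3 := by rw [hw1def, List.length_set]; exact hw0len
  set w₂ := w₁.set (U.length + 3) (Delta.pair (some b₂) (lett s (U.length + 3))) with hw2def
  have hw2len : w₂.length = s.length + 3 := by rw [hw2def, List.length_set]; exact hw1len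
  have hw1get : ∀ k, w₁[k]? = if k = U.length + 2 then some (Delta.x i) else w₀[k]? := by
    intro k
    rw [hw1def, List.getElem?_set]
    rcases eq_or_ne (U.length + 2) k with rfl | hk
    · rw [if_pos rfl, if_pos (by rw [hw0len]; omega), if_pos rfl]
    · rw [if_neg hk, if_neg (Ne.symm hk)]
  have hw2get : ∀ k, w₂[k]? =
      if k = U.length + 3 then some (Delta.pair (some b₂) (lett s (U.length + 3)))
      else if k = U.length + 2 then some (Delta.x i) else w₀[k]? := by
    intro k
    rw [hw2def, List.getElem?_set]
    rcases eq_or_ne (U.length + 3) k with rfl | hk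
    · rw [if_pos rfl, if_pos (by rw [hw1len]; omega), if_pos rfl]
    · rw [if_neg hk, if_neg (Ne.symm hk), hw1get]
  have hInv1 : Inv Rule s w₁ := by
    refine ⟨hw1len, ?_, ?_, ?_⟩
    · rw [hw1get, if_neg (by omega), hw0, psi_getElem?, if_pos rfl]
    · rw [hw1get, if_neg (by omega), hw0, psi_getElem?, if_neg (by omega), if_neg (by omega),
        if_pos rfl]
    · intro k hk1 hk2
      rcases eq_or_ne k (U.length + 2) with rfl | hk
      · refine Or.inr ⟨i, by rw [hw1get, if_pos rfl], ?_⟩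
        rw [e2, hs1, hs2]
        exact hS1
      · left
        rw [hw1get, if_neg hk, hw0, psi_getElem?, if_neg (by omega), if_pos hk2]
  have hInv2 : Inv Rule t w₂ := by
    refine ⟨by rw [hw2len, htlen], ?_, ?_, ?_⟩
    · rw [hw2get, if_neg (by omega), if_neg (by omega), hw0, psi_getElem?, if_pos rfl]
    · rw [htlen, hw2get, if_neg (by omega), if_neg (by omega), hw0, psi_getElem?,
        if_neg (by omega), if_neg (by omega), if_pos rfl]
    · intro k hk1 hk2
      rw [htlen] at hk2
      rcases eq_or_ne k (U.length + 3) with rfl | hk3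
      · left
        rw [hw2get, if_pos rfl, e3, ht2, ← hst (U.length+3) (by omega)]
      rcases eq_or_ne k (U.length + 2) with rfl | hk2'
      · refine Or.inr ⟨i, by rw [hw2get, if_neg (by omega), if_pos rfl], ?_⟩
        rw [e2, ht1, ht2]
        exact hS2
      · left
        rw [hw2get, if_neg hk3, if_neg hk2', hw0, psi_getElem?, if_neg (by omega), if_pos hk2,
          hst (k-1) (by omega), hst k hk2']
  have hx1 : ∀ k i1 i2, w₁[k]? = some (Delta.x i1) → w₁[k+1]? = some (Delta.x i2) → False := by
    intro k i1 i2 h1 h2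
    rw [hw1get] at h1 h2
    by_cases hk : k = U.length + 2
    · rw [if_neg (by omega), hw0] at h2
      exact psi_no_x h2
    · rw [if_neg hk, hw0] at h1
      exact psi_no_x h1
  have hx2 : ∀ k i1 i2, w₂[k]? = some (Delta.x i1) → w₂[k+1]? = some (Delta.x i2) → False := by
    intro k i1 i2 h1 h2
    rw [hw2get] at h1 h2
    by_cases hk3 : k = U.length + 3
    · rw [if_pos hk3] at h1
      simp at h1
    by_cases hk2' : k = U.length + 2
    · rw [if_pos (by omega)] at h2
      simp at h2
    · rw [if_neg hk3, if_neg hk2', hw0] at h1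
      exact psi_no_x h1
  have hch1 : List.Chain' (ERel Rule) w₁ := chain'_of_inv hn hInv1 hx1
  have hch2 : List.Chain' (ERel Rule) w₂ := chain'_of_inv (by omega) hInv2 hx2
  have hw3get : ∀ k, (w₂.set (U.length + 2) (Delta.pair (some a₁) (some b₂)))[k]? =
      if k = U.length + 2 then some (Delta.pair (some a₁) (some b₂)) else w₂[k]? := by
    intro k
    rw [List.getElem?_set]
    rcases eq_or_ne (U.length + 2) k with rfl | hk
    · rw [if_pos rfl, if_pos (by rw [hw2len]; omega), if_pos rfl]
    · rw [if_neg hk, if_neg (Ne.symm hk)]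
  have hw3 : w₂.set (U.length + 2) (Delta.pair (some a₁) (some b₂)) = psi m t := by
    apply eq_psi_of
    · rw [List.length_set, hw2len, htlen]
    · rw [hw3get, if_neg (by omega), hw2get, if_neg (by omega), if_neg (by omega), hw0,
        psi_getElem?, if_pos rfl]
    · rw [htlen, hw3get, if_neg (by omega), hw2get, if_neg (by omega), if_neg (by omega), hw0,
        psi_getElem?, if_neg (by omega), if_neg (by omega), if_pos rfl]
    · intro k hk1 hk2
      rw [htlen] at hk2
      rcases eq_or_ne k (U.length + 2) with rfl | hk2'
      · rw [hw3get, if_pos rfl, e2, ht1, ht2]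
      rcases eq_or_ne k (U.length + 3) with rfl | hk3
      · rw [hw3get, if_neg (by omega), hw2get, if_pos rfl, e3, ht2,
          ← hst (U.length+3) (by omega)]
      · rw [hw3get, if_neg hk2', hw2get, if_neg hk3, if_neg hk2', hw0, psi_getElem?,
          if_neg (by omega), if_pos hk2, hst (k-1) (by omega), hst k hk2']
  have d01 : DiffOne w₀ w₁ := by
    rw [hw1def]
    refine diffOne_set (a := Delta.pair (lett s (U.length+1)) (lett s (U.length+2))) ?_ (by simp)
    rw [hw0, psi_getElem?, if_neg (by omega), if_pos (by omega), e2]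
  have d12 : DiffOne w₁ w₂ := by
    rw [hw2def]
    refine diffOne_set (a := Delta.pair (some a₂) (lett s (U.length+3))) ?_ ?_
    · rw [hw1get, if_neg (by omega), hw0, psi_getElem?, if_neg (by omega), if_pos (by omega),
        e3, hs2]
    · intro h
      injection h with h1 h2
      exact hne (Option.some.inj h1)
  have d23 : DiffOne w₂ (psi m t) := by
    rw [← hw3]
    refine diffOne_set (a := Delta.x i) ?_ (by simp)
    rw [hw2get, if_neg (by omega), if_pos rfl]
  refine ⟨3, fun q => if q = 0 then w₀ else if q = 1 then w₁ else if q = 2 then w₂ else psi m t,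
    rfl, rfl, ?_, ?_⟩
  · intro q hq
    have : q = 0 ∨ q = 1 ∨ q = 2 ∨ q = 3 := by omega
    rcases this with rfl | rfl | rfl | rfl
    · exact ⟨hw0len, hw0 ▸ chain'_psi hn⟩
    · exact ⟨hw1len, hch1⟩
    · exact ⟨hw2len, hch2⟩
    · exact ⟨(psi_length t).trans (by rw [htlen]), chain'_psi (by omega)⟩
  · intro q hq
    have : q = 0 ∨ q = 1 ∨ q = 2 := by omega
    rcases this with rfl | rfl | rfl
    · exact d01
    · exact d12
    · exact d23


lemma forward_core_B {Rule : Fin m → (Γ × Γ) × (Γ × Γ)} {i : Fin m}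
    (U V : List Γ) (a₁ a₂ b₁ : Γ)
    (hS1 : Sides Rule i (some a₁) (some a₂)) (hS2 : Sides Rule i (some b₁) (some a₂))
    (hne : a₁ ≠ b₁) :
    ∃ (l : ℕ) (u : ℕ → List (Delta Γ m)),
      u 0 = psi m (U ++ [a₁, a₂] ++ V) ∧ u l = psi m (U ++ [b₁, a₂] ++ V) ∧
      (∀ q ≤ l, (u q).length = (U ++ [a₁, a₂] ++ V).length + 3 ∧
        List.Chain' (ERel Rule) (u q)) ∧
      (∀ q < l, DiffOne (u q) (u (q + 1))) := by
  set s := U ++ [a₁, a₂] ++ V with hsdef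
  set t := U ++ [b₁, a₂] ++ V with htdef
  have hslen : s.length = U.length + 2 + V.length := by
    simp only [hsdef, List.length_append, List.length_cons, List.length_nil]
  have htlen : t.length = s.length := by
    simp only [hsdef, htdef, List.length_append, List.length_cons, List.length_nil]
  have hn : 1 ≤ s.length := by omega
  have e1 : U.length + 1 - 1 = U.length := by omega
  have e2 : U.length + 2 - 1 = U.length + 1 := by omega
  have hs1 : lett s (U.length + 1) = some a₁ := lett_two_eq₁
  have hs2 : lett s (U.length + 2) = some a₂ := lett_two_eq₂
  have ht1 : lett t (U.length + 1) = some b₁ := lett_two_eq₁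
  have ht2 : lett t (U.length + 2) = some a₂ := lett_two_eq₂
  have hst : ∀ r, r ≠ U.length + 1 → lett s r = lett t r := by
    intro r hr
    rcases eq_or_ne r (U.length + 2) with rfl | hr2
    · rw [hs2, ht2]
    · exact lett_two_ne hr hr2
  set w₀ := psi (Γ := Γ) m s with hw0
  have hw0len : w₀.length = s.length + 3 := psi_length s
  set w₁ := w₀.set (U.length + 2) (Delta.x i) with hw1def
  have hw1len : w₁.length = s.length + 3 := by rw [hw1def, List.length_set]; exact hw0len
  set w₂ := w₁.set (U.length + 1) (Delta.pair (lett s U.length) (some b₁)) with hw2def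
  have hw2len : w₂.length = s.length + 3 := by rw [hw2def, List.length_set]; exact hw1len
  have hw1get : ∀ k, w₁[k]? = if k = U.length + 2 then some (Delta.x i) else w₀[k]? := by
    intro k
    rw [hw1def, List.getElem?_set]
    rcases eq_or_ne (U.length + 2) k with rfl | hk
    · rw [if_pos rfl, if_pos (by rw [hw0len]; omega), if_pos rfl]
    · rw [if_neg hk, if_neg (Ne.symm hk)]
  have hw2get : ∀ k, w₂[k]? =
      if k = U.length + 1 then some (Delta.pair (lett s U.length) (some b₁))
      else if k = U.length + 2 then some (Delta.x i) else w₀[k]? := by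
    intro k
    rw [hw2def, List.getElem?_set]
    rcases eq_or_ne (U.length + 1) k with rfl | hk
    · rw [if_pos rfl, if_pos (by rw [hw1len]; omega), if_pos rfl]
    · rw [if_neg hk, if_neg (Ne.symm hk), hw1get]
  have hInv1 : Inv Rule s w₁ := by
    refine ⟨hw1len, ?_, ?_, ?_⟩
    · rw [hw1get, if_neg (by omega), hw0, psi_getElem?, if_pos rfl]
    · rw [hw1get, if_neg (by omega), hw0, psi_getElem?, if_neg (by omega), if_neg (by omega),
        if_pos rfl]
    · intro k hk1 hk2
      rcases eq_or_ne k (U.length + 2) with rfl | hk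
      · refine Or.inr ⟨i, by rw [hw1get, if_pos rfl], ?_⟩
        rw [e2, hs1, hs2]
        exact hS1
      · left
        rw [hw1get, if_neg hk, hw0, psi_getElem?, if_neg (by omega), if_pos hk2]
  have hInv2 : Inv Rule t w₂ := by
    refine ⟨by rw [hw2len, htlen], ?_, ?_, ?_⟩
    · rw [hw2get, if_neg (by omega), if_neg (by omega), hw0, psi_getElem?, if_pos rfl]
    · rw [htlen, hw2get, if_neg (by omega), if_neg (by omega), hw0, psi_getElem?,
        if_neg (by omega), if_neg (by omega), if_pos rfl]
    · intro k hk1 hk2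
      rw [htlen] at hk2
      rcases eq_or_ne k (U.length + 1) with rfl | hk1'
      · left
        rw [hw2get, if_pos rfl, e1, ht1, ← hst U.length (by omega)]
      rcases eq_or_ne k (U.length + 2) with rfl | hk2'
      · refine Or.inr ⟨i, by rw [hw2get, if_neg (by omega), if_pos rfl], ?_⟩
        rw [e2, ht1, ht2]
        exact hS2
      · left
        rw [hw2get, if_neg hk1', if_neg hk2', hw0, psi_getElem?, if_neg (by omega), if_pos hk2,
          hst (k-1) (by omega), hst k hk1']
  have hx1 : ∀ k i1 i2, w₁[k]? = some (Delta.x i1) → w₁[k+1]? = some (Delta.x i2) → False := by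
    intro k i1 i2 h1 h2
    rw [hw1get] at h1 h2
    by_cases hk : k = U.length + 2
    · rw [if_neg (by omega), hw0] at h2
      exact psi_no_x h2
    · rw [if_neg hk, hw0] at h1
      exact psi_no_x h1
  have hx2 : ∀ k i1 i2, w₂[k]? = some (Delta.x i1) → w₂[k+1]? = some (Delta.x i2) → False := by
    intro k i1 i2 h1 h2
    rw [hw2get] at h1 h2
    by_cases hk1' : k = U.length + 1
    · rw [if_pos hk1'] at h1
      simp at h1
    by_cases hk2' : k = U.length + 2
    · rw [if_neg (by omega), if_neg (by omega), hw0] at h2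
      exact psi_no_x h2
    · rw [if_neg hk1', if_neg hk2', hw0] at h1
      exact psi_no_x h1
  have hch1 : List.Chain' (ERel Rule) w₁ := chain'_of_inv hn hInv1 hx1
  have hch2 : List.Chain' (ERel Rule) w₂ := chain'_of_inv (by omega) hInv2 hx2
  have hw3get : ∀ k, (w₂.set (U.length + 2) (Delta.pair (some b₁) (some a₂)))[k]? =
      if k = U.length + 2 then some (Delta.pair (some b₁) (some a₂)) else w₂[k]? := by
    intro k
    rw [List.getElem?_set]
    rcases eq_or_ne (U.length + 2) k with rfl | hk
    · rw [if_pos rfl, if_pos (by rw [hw2len]; omega), if_pos rfl]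
    · rw [if_neg hk, if_neg (Ne.symm hk)]
  have hw3 : w₂.set (U.length + 2) (Delta.pair (some b₁) (some a₂)) = psi m t := by
    apply eq_psi_of
    · rw [List.length_set, hw2len, htlen]
    · rw [hw3get, if_neg (by omega), hw2get, if_neg (by omega), if_neg (by omega), hw0,
        psi_getElem?, if_pos rfl]
    · rw [htlen, hw3get, if_neg (by omega), hw2get, if_neg (by omega), if_neg (by omega), hw0,
        psi_getElem?, if_neg (by omega), if_neg (by omega), if_pos rfl]
    · intro k hk1 hk2
      rw [htlen] at hk2
      rcases eq_or_ne k (U.length + 2) with rfl | hk2'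
      · rw [hw3get, if_pos rfl, e2, ht1, ht2]
      rcases eq_or_ne k (U.length + 1) with rfl | hk1'
      · rw [hw3get, if_neg (by omega), hw2get, if_pos rfl, e1, ht1,
          ← hst U.length (by omega)]
      · rw [hw3get, if_neg hk2', hw2get, if_neg hk1', if_neg hk2', hw0, psi_getElem?,
          if_neg (by omega), if_pos hk2, hst (k-1) (by omega), hst k hk1']
  have d01 : DiffOne w₀ w₁ := by
    rw [hw1def]
    refine diffOne_set (a := Delta.pair (lett s (U.length+1)) (lett s (U.length+2))) ?_ (by simp)
    rw [hw0, psi_getElem?, if_neg (by omega), if_pos (by omega), e2]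
  have d12 : DiffOne w₁ w₂ := by
    rw [hw2def]
    refine diffOne_set (a := Delta.pair (lett s U.length) (some a₁)) ?_ ?_
    · rw [hw1get, if_neg (by omega), hw0, psi_getElem?, if_neg (by omega), if_pos (by omega),
        e1, hs1]
    · intro h
      injection h with h1 h2
      exact hne (Option.some.inj h2)
  have d23 : DiffOne w₂ (psi m t) := by
    rw [← hw3]
    refine diffOne_set (a := Delta.x i) ?_ (by simp)
    rw [hw2get, if_neg (by omega), if_pos rfl]
  refine ⟨3, fun q => if q = 0 then w₀ else if q = 1 then w₁ else if q = 2 then w₂ else psi m t,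
    rfl, rfl, ?_, ?_⟩
  · intro q hq
    have : q = 0 ∨ q = 1 ∨ q = 2 ∨ q = 3 := by omega
    rcases this with rfl | rfl | rfl | rfl
    · exact ⟨hw0len, hw0 ▸ chain'_psi hn⟩
    · exact ⟨hw1len, hch1⟩
    · exact ⟨hw2len, hch2⟩
    · exact ⟨(psi_length t).trans (by rw [htlen]), chain'_psi (by omega)⟩
  · intro q hq
    have : q = 0 ∨ q = 1 ∨ q = 2 := by omega
    rcases this with rfl | rfl | rfl
    · exact d01
    · exact d12
    · exact d23


lemma step_lemma {Rule : Fin m → (Γ × Γ) × (Γ × Γ)}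
    (hrule : ∀ i, (Rule i).1.1 = (Rule i).2.1 ∨ (Rule i).1.2 = (Rule i).2.2)
    {v : List Γ} {u u' : List (Delta Γ m)} (hn : 1 ≤ v.length)
    (hInv : Inv Rule v u) (hc' : List.Chain' (ERel Rule) u') (hd : DiffOne u u') :
    ∃ v', v'.length = v.length ∧ Inv Rule v' u' ∧ Relation.ReflTransGen (SStep Rule) v v' := by
  obtain ⟨hul, hu0, hulast, hmid⟩ := hInv
  obtain ⟨k₀, a, b, hab, hk₀, hlen', ha, hb, hrest⟩ := diffOne_elim hd
  rcases Nat.eq_zero_or_pos k₀ with rfl | hk0pos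
  · exfalso
    rw [hu0] at ha
    obtain rfl := Option.some.inj ha
    rcases hmid 1 le_rfl (by omega) with h | ⟨i, h, hS⟩
    · rw [hrest 1 (by omega)] at h
      have hE := chain'_getElem? hc' (k := 0) hb h
      rcases erel_into_pair hE with ⟨hbl, -, -⟩ | ⟨e, γ, hcc, -⟩ | ⟨i, -, hcc | hcc⟩
      · exact hab hbl.symm
      · rw [lett_zero] at hcc
        exact nomatch hcc
      · rw [lett_zero] at hcc
        exact nomatch hcc
      · rw [lett_zero] at hcc
        exact nomatch hcc
    · obtain ⟨γ, hγ⟩ := hS.fst_some Rule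
      rw [lett_zero] at hγ
      exact nomatch hγ
  by_cases hklast : k₀ = v.length + 2
  · exfalso
    subst hklast
    rw [hulast] at ha
    obtain rfl := Option.some.inj ha
    rcases hmid (v.length+1) (by omega) (by omega) with h | ⟨i, h, hS⟩
    · rw [hrest (v.length+1) (by omega)] at h
      have hE := chain'_getElem? hc' h hb
      rcases erel_out_pair hE with ⟨hbr, -, -⟩ | ⟨e, γ, hcc, -⟩ | ⟨i', -, hcc | hcc⟩
      · exact hab hbr.symm
      · rw [lett_of_gt v (by omega)] at hcc
        exact nomatch hcc
      · rw [lett_of_gt v (by omega)] at hcc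
        exact nomatch hcc
      · rw [lett_of_gt v (by omega)] at hcc
        exact nomatch hcc
    · obtain ⟨γ, hγ⟩ := hS.snd_some Rule
      rw [lett_of_gt v (by omega)] at hγ
      exact nomatch hγ
  have hk₀le : k₀ ≤ v.length + 1 := by rw [hul] at hk₀; omega
  obtain ⟨k, rfl⟩ : ∃ k, k₀ = k + 1 := ⟨k₀ - 1, by omega⟩
  cases b with
  | left =>
    exfalso
    obtain ⟨L, hL⟩ : ∃ L, u[k]? = some L :=
      ⟨u[k]'(by omega), List.getElem?_eq_getElem (by omega)⟩
    rw [hrest k (by omega)] at hL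
    exact not_erel_into_left (chain'_getElem? hc' hL hb)
  | right =>
    exfalso
    obtain ⟨R, hR⟩ : ∃ R, u[k+2]? = some R :=
      ⟨u[k+2]'(by omega), List.getElem?_eq_getElem (by omega)⟩
    rw [hrest (k+2) (by omega)] at hR
    exact not_erel_out_right (chain'_getElem? hc' hb hR)
  | x i =>
    rcases Nat.eq_zero_or_pos k with rfl | hkpos
    · exfalso
      rw [hrest 0 (by omega)] at hu0
      obtain ⟨c, hcase⟩ := erel_into_x (chain'_getElem? hc' hu0 hb)
      rcases hcase with h | h <;> exact nomatch h
    rcases hmid k hkpos (by omega) with hLp | ⟨iL, hLx, -⟩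
    swap
    · exfalso
      rw [hrest k (by omega)] at hLx
      obtain ⟨c, hcase⟩ := erel_into_x (chain'_getElem? hc' hLx hb)
      rcases hcase with h | h <;> exact nomatch h
    have hLp' := hLp
    rw [hrest k (by omega)] at hLp'
    obtain ⟨c, hcase⟩ := erel_into_x (chain'_getElem? hc' hLp' hb)
    have hfst : lett v k = some (Rule i).1.1 ∨ lett v k = some (Rule i).2.1 := by
      rcases hcase with h | h
      · injection h with h1 h2
        exact Or.inl h2
      · injection h with h1 h2
        exact Or.inr h2
    by_cases hkn : k = v.length
    · exfalso
      subst hkn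
      rw [hrest (v.length+2) (by omega)] at hulast
      obtain ⟨c', hcase'⟩ := erel_out_x (chain'_getElem? hc' hb hulast)
      rcases hcase' with h | h <;> exact nomatch h
    rcases hmid (k+2) (by omega) (by omega) with hRp | ⟨iR, hRx, -⟩
    swap
    · exfalso
      rw [hrest (k+2) (by omega)] at hRx
      obtain ⟨c', hcase'⟩ := erel_out_x (chain'_getElem? hc' hb hRx)
      rcases hcase' with h | h <;> exact nomatch h
    have hRp' := hRp
    rw [hrest (k+2) (by omega)] at hRp'
    obtain ⟨c', hcase'⟩ := erel_out_x (chain'_getElem? hc' hb hRp')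
    have hsnd : lett v (k+1) = some (Rule i).1.2 ∨ lett v (k+1) = some (Rule i).2.2 := by
      rcases hcase' with h | h
      · injection h with h1 h2
        exact Or.inl h1
      · injection h with h1 h2
        exact Or.inr h1
    refine ⟨v, rfl, ⟨by rw [hlen', hul], ?_, ?_, ?_⟩, Relation.ReflTransGen.refl⟩
    · rw [← hrest 0 (by omega)]
      exact hu0
    · rw [← hrest (v.length+2) (by omega)]
      exact hulast
    · intro k' h1' h2'
      rcases eq_or_ne k' (k+1) with rfl | hk'
      · refine Or.inr ⟨i, hb, ?_⟩
        rw [show k + 1 - 1 = k from by omega]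
        exact sides_of_mem Rule hrule hfst hsnd
      · rw [← hrest k' hk']
        exact hmid k' h1' h2'
  | pair d e =>
    have hdc : d = lett v k ∨ ∃ iL δ, d = some δ ∧
        (δ = (Rule iL).1.2 ∨ δ = (Rule iL).2.2) ∧
        Sides Rule iL (lett v (k-1)) (lett v k) ∧ u[k]? = some (Delta.x iL) := by
      rcases Nat.eq_zero_or_pos k with rfl | hkpos
      · left
        have h0' : u'[0]? = some Delta.left := by rw [← hrest 0 (by omega)]; exact hu0
        have hE := chain'_getElem? hc' h0' hb
        rcases erel_into_pair hE with ⟨-, hdn, -⟩ | ⟨e', γ, -, hpl⟩ | ⟨i', hpl, -⟩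
        · rw [hdn, lett_zero]
        · exact nomatch hpl
        · exact nomatch hpl
      · rcases hmid k hkpos (by omega) with hLp | ⟨iL, hLx, hSL⟩
        · left
          have hLp' := hLp
          rw [hrest k (by omega)] at hLp'
          have hE := chain'_getElem? hc' hLp' hb
          rcases erel_into_pair hE with ⟨hpl, -, -⟩ | ⟨e', γ, hdγ, hpl⟩ | ⟨i', hpl, -⟩
          · exact nomatch hpl
          · injection hpl with h1 h2
            rw [hdγ, ← h2]
          · exact nomatch hpl
        · right
          have hLx' := hLx
          rw [hrest k (by omega)] at hLx'
          have hE := chain'_getElem? hc' hLx' hb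
          rcases erel_into_pair hE with ⟨hpl, -, -⟩ | ⟨e', γ, hdγ, hpl⟩ | ⟨i', hpl, hopt⟩
          · exact nomatch hpl
          · exact nomatch hpl
          · injection hpl with hi
            subst hi
            obtain ⟨δ, hδ⟩ : ∃ δ, d = some δ := by rcases hopt with h|h <;> exact ⟨_, h⟩
            refine ⟨iL, δ, hδ, ?_, hSL, hLx⟩
            rcases hopt with h|h <;> [left; right] <;>
              (rw [hδ] at h; exact Option.some.inj h)
    have hec : e = lett v (k+1) ∨ ∃ iR ε, e = some ε ∧
        (ε = (Rule iR).1.1 ∨ ε = (Rule iR).2.1) ∧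
        Sides Rule iR (lett v (k+1)) (lett v (k+2)) ∧ u[k+2]? = some (Delta.x iR) := by
      by_cases hkn : k + 1 = v.length + 1
      · left
        have hlast' : u'[k+2]? = some Delta.right := by
          rw [← hrest (k+2) (by omega), show k + 2 = v.length + 2 from by omega]
          exact hulast
        have hE := chain'_getElem? hc' hb hlast'
        rcases erel_out_pair hE with ⟨-, hen, -⟩ | ⟨e', γ, heγ, hpl⟩ | ⟨i', hpl, -⟩
        · rw [hen, lett_of_gt v (by omega)]
        · exact nomatch hpl
        · exact nomatch hpl
      · rcases hmid (k+2) (by omega) (by omega) with hRp | ⟨iR, hRx, hSR⟩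
        · left
          have hRp' := hRp
          rw [hrest (k+2) (by omega)] at hRp'
          have hE := chain'_getElem? hc' hb hRp'
          rcases erel_out_pair hE with ⟨hpl, -, -⟩ | ⟨e', γ, heγ, hpl⟩ | ⟨i', hpl, -⟩
          · exact nomatch hpl
          · injection hpl with h1 h2
            rw [heγ]
            exact h1.symm
          · exact nomatch hpl
        · right
          have hRx' := hRx
          rw [hrest (k+2) (by omega)] at hRx'
          have hE := chain'_getElem? hc' hb hRx'
          rcases erel_out_pair hE with ⟨hpl, -, -⟩ | ⟨e', γ, heγ, hpl⟩ | ⟨i', hpl, hopt⟩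
          · exact nomatch hpl
          · exact nomatch hpl
          · injection hpl with hi
            subst hi
            obtain ⟨ε, hε⟩ : ∃ ε, e = some ε := by rcases hopt with h|h <;> exact ⟨_, h⟩
            refine ⟨iR, ε, hε, ?_, ?_, hRx⟩
            · rcases hopt with h|h <;> [left; right] <;>
                (rw [hε] at h; exact Option.some.inj h)
            · exact hSR
    have stage1 : ∃ v₁ : List Γ, v₁.length = v.length ∧
        Relation.ReflTransGen (SStep Rule) v v₁ ∧
        lett v₁ k = d ∧ (∀ r, r ≠ k → lett v₁ r = lett v r) := by
      rcases hdc with hdeq | ⟨iL, δ, hδ, hδmem, hSL, hLx⟩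
      · exact ⟨v, rfl, Relation.ReflTransGen.refl, hdeq.symm, fun r _ => rfl⟩
      · obtain ⟨c₂, hc₂⟩ := hSL.snd_some Rule
        obtain ⟨c₁, hc₁⟩ := hSL.fst_some Rule
        obtain ⟨hkk1, hkk2⟩ := lett_some_bounds hc₂
        obtain ⟨hkk3, hkk4⟩ := lett_some_bounds hc₁
        by_cases hδc : δ = c₂
        · refine ⟨v, rfl, Relation.ReflTransGen.refl, ?_, fun r _ => rfl⟩
          rw [hδ, hδc]
          exact hc₂
        · refine ⟨v.set (k-1) δ, by rw [List.length_set], ?_, ?_, ?_⟩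
          · apply Relation.ReflTransGen.single
            have hget1 : v[k-2]? = some c₁ := by
              rw [← show k-1-1 = k-2 from by omega, ← lett_pos v (show 0 < k-1 by omega)]
              exact hc₁
            have hget2 : v[k-2+1]? = some c₂ := by
              rw [show k-2+1 = k-1 from by omega]
              have := hc₂
              rw [lett_pos v (by omega)] at this
              exact this
            have h1 : Sides Rule iL (some c₁) (some c₂) := by
              have := hSL
              rw [hc₁, hc₂] at this
              exact this
            have h2 : Sides Rule iL (some c₁) (some δ) := by
              refine sides_of_mem Rule hrule ?_ ?_
              · rcases h1.fst_mem Rule with h|h <;> [left; right] <;> exact h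
              · rcases hδmem with h|h <;> [left; right] <;> exact congrArg some h
            have hne2 : ¬(c₁ = c₁ ∧ c₂ = δ) := fun h => hδc h.2.symm
            have hs := sstep_of_sides hget1 hget2 h1 h2 hne2
            rw [set_getElem?_self hget1, show k-2+1 = k-1 from by omega] at hs
            exact hs
          · rw [lett_set v (k-1) (by omega) δ k, if_pos (by omega), hδ]
          · intro r hr
            rw [lett_set v (k-1) (by omega) δ r, if_neg (by omega)]
    obtain ⟨v₁, hv₁len, hv₁steps, hv₁k, hv₁ne⟩ := stage1
    have stage2 : ∃ v₂ : List Γ, v₂.length = v.length ∧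
        Relation.ReflTransGen (SStep Rule) v₁ v₂ ∧
        lett v₂ (k+1) = e ∧ (∀ r, r ≠ k+1 → lett v₂ r = lett v₁ r) := by
      rcases hec with heeq | ⟨iR, ε, hε, hεmem, hSR, hRx⟩
      · refine ⟨v₁, hv₁len, Relation.ReflTransGen.refl, ?_, fun r _ => rfl⟩
        rw [hv₁ne (k+1) (by omega), heeq]
      · obtain ⟨ε₀, hε₀⟩ := hSR.fst_some Rule
        obtain ⟨ε₁, hε₁⟩ := hSR.snd_some Rule
        obtain ⟨-, hb2⟩ := lett_some_bounds hε₁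
        have hε₀' : lett v₁ (k+1) = some ε₀ := by rw [hv₁ne (k+1) (by omega)]; exact hε₀
        have hε₁' : lett v₁ (k+2) = some ε₁ := by rw [hv₁ne (k+2) (by omega)]; exact hε₁
        by_cases hεc : ε = ε₀
        · refine ⟨v₁, hv₁len, Relation.ReflTransGen.refl, ?_, fun r _ => rfl⟩
          rw [hε, hεc]
          exact hε₀'
        · refine ⟨v₁.set k ε, by rw [List.length_set, hv₁len], ?_, ?_, ?_⟩
          · apply Relation.ReflTransGen.single
            have hget1 : v₁[k]? = some ε₀ := by
              have := hε₀'
              rw [lett_pos v₁ (by omega)] at this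
              exact this
            have hget2 : v₁[k+1]? = some ε₁ := by
              have := hε₁'
              rw [lett_pos v₁ (by omega)] at this
              exact this
            have h1 : Sides Rule iR (some ε₀) (some ε₁) := by
              have := hSR
              rw [hε₀, hε₁] at this
              exact this
            have h2 : Sides Rule iR (some ε) (some ε₁) := by
              refine sides_of_mem Rule hrule ?_ ?_
              · rcases hεmem with h|h <;> [left; right] <;> exact congrArg some h
              · rcases h1.snd_mem Rule with h|h <;> [left; right] <;> exact h
            have hne2 : ¬(ε₀ = ε ∧ ε₁ = ε₁) := fun h => hεc h.1.symm
            have hs := sstep_of_sides hget1 hget2 h1 h2 hne2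
            have hself : (v₁.set k ε)[k+1]? = some ε₁ := by
              rw [List.getElem?_set, if_neg (by omega)]
              exact hget2
            rw [set_getElem?_self hself] at hs
            exact hs
          · rw [lett_set v₁ k (by omega) ε (k+1), if_pos rfl]
            exact hε.symm
          · intro r hr
            rw [lett_set v₁ k (by omega) ε r, if_neg (by omega)]
    obtain ⟨v₂, hv₂len, hv₂steps, hv₂k1, hv₂ne⟩ := stage2
    refine ⟨v₂, hv₂len, ⟨?_, ?_, ?_, ?_⟩, hv₁steps.trans hv₂steps⟩
    · rw [hlen', hul, hv₂len]
    · rw [← hrest 0 (by omega)]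
      exact hu0
    · rw [hv₂len, ← hrest (v.length+2) (by omega)]
      exact hulast
    · intro k' h1' h2'
      rw [hv₂len] at h2'
      rcases eq_or_ne k' (k+1) with rfl | hk'
      · left
        rw [hb, show k + 1 - 1 = k from by omega, hv₂k1, hv₂ne k (by omega), hv₁k]
      rw [← hrest k' hk']
      rcases eq_or_ne k' (k+2) with rfl | hk2'
      · rcases hec with heeq | ⟨iR, ε, hε, hεmem, hSR, hRx⟩
        · have hl1 : lett v₂ (k+1) = lett v (k+1) := by rw [hv₂k1, heeq]
          have hl2 : lett v₂ (k+2) = lett v (k+2) := by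
            rw [hv₂ne _ (by omega), hv₁ne _ (by omega)]
          rcases hmid (k+2) (by omega) (by omega) with h | ⟨i'', h, hS''⟩
          · left
            rw [h, show k + 2 - 1 = k + 1 from by omega, hl1, hl2]
          · refine Or.inr ⟨i'', h, ?_⟩
            rw [show k + 2 - 1 = k + 1 from by omega, hl1, hl2]
            exact hS''
        · refine Or.inr ⟨iR, hRx, ?_⟩
          rw [show k + 2 - 1 = k + 1 from by omega, hv₂k1, hε, hv₂ne _ (by omega),
            hv₁ne _ (by omega)]
          refine sides_of_mem Rule hrule ?_ (hSR.snd_mem Rule)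
          rcases hεmem with h|h <;> [left; right] <;> exact congrArg some h
      rcases eq_or_ne k k' with rfl | hkk'
      · rcases hdc with hdeq | ⟨iL, δ, hδ, hδmem, hSL, hLx⟩
        · have hl1 : lett v₂ (k-1) = lett v (k-1) := by
            rw [hv₂ne _ (by omega), hv₁ne _ (by omega)]
          have hl2 : lett v₂ k = lett v k := by
            rw [hv₂ne _ (by omega), hv₁k, hdeq]
          rcases hmid k h1' (by omega) with h | ⟨i'', h, hS''⟩
          · left
            rw [h, hl1, hl2]
          · refine Or.inr ⟨i'', h, ?_⟩
            rw [hl1, hl2]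
            exact hS''
        · refine Or.inr ⟨iL, hLx, ?_⟩
          rw [hv₂ne (k-1) (by omega), hv₁ne (k-1) (by omega), hv₂ne k (by omega), hv₁k, hδ]
          refine sides_of_mem Rule hrule (hSL.fst_mem Rule) ?_
          rcases hδmem with h|h <;> [left; right] <;> exact congrArg some h
      · have hl1 : lett v₂ (k'-1) = lett v (k'-1) := by
          rw [hv₂ne _ (by omega), hv₁ne _ (by omega)]
        have hl2 : lett v₂ k' = lett v k' := by
          rw [hv₂ne _ (by omega), hv₁ne _ (by omega)]
        rcases hmid k' h1' (by omega) with h | ⟨i'', h, hS''⟩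
        · left
          rw [h, hl1, hl2]
        · refine Or.inr ⟨i'', h, ?_⟩
          rw [hl1, hl2]
          exact hS''


lemma forward_core {Rule : Fin m → (Γ × Γ) × (Γ × Γ)}
    (hrule : ∀ i, (Rule i).1.1 = (Rule i).2.1 ∨ (Rule i).1.2 = (Rule i).2.2)
    {i : Fin m} (U V : List Γ) (a₁ a₂ b₁ b₂ : Γ)
    (hS1 : Sides Rule i (some a₁) (some a₂)) (hS2 : Sides Rule i (some b₁) (some b₂)) :
    ∃ (l : ℕ) (u : ℕ → List (Delta Γ m)),
      u 0 = psi m (U ++ [a₁, a₂] ++ V) ∧ u l = psi m (U ++ [b₁, b₂] ++ V) ∧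
      (∀ q ≤ l, (u q).length = (U ++ [a₁, a₂] ++ V).length + 3 ∧
        List.Chain' (ERel Rule) (u q)) ∧
      (∀ q < l, DiffOne (u q) (u (q + 1))) := by
  by_cases h12 : a₁ = b₁ ∧ a₂ = b₂
  · obtain ⟨rfl, rfl⟩ := h12
    refine ⟨0, fun _ => psi m (U ++ [a₁, a₂] ++ V), rfl, rfl,
      fun q hq => ⟨psi_length _, chain'_psi ?_⟩, fun q hq => absurd hq (by omega)⟩
    simp only [List.length_append, List.length_cons, List.length_nil]
    omega
  · have hor : a₁ = b₁ ∨ a₂ = b₂ := by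
      obtain ⟨e1, e2⟩ | ⟨e1, e2⟩ := hS1 <;> obtain ⟨f1, f2⟩ | ⟨f1, f2⟩ := hS2
      · exact Or.inl (by rw [Option.some.inj e1, Option.some.inj f1])
      · rcases hrule i with h | h
        · exact Or.inl (by rw [Option.some.inj e1, Option.some.inj f1, h])
        · exact Or.inr (by rw [Option.some.inj e2, Option.some.inj f2, h])
      · rcases hrule i with h | h
        · exact Or.inl (by rw [Option.some.inj e1, Option.some.inj f1, h])
        · exact Or.inr (by rw [Option.some.inj e2, Option.some.inj f2, h])
      · exact Or.inl (by rw [Option.some.inj e1, Option.some.inj f1])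
    rcases hor with h | h
    · subst h
      exact forward_core_A U V _ _ _ hS1 hS2 (fun hh => h12 ⟨rfl, hh⟩)
    · subst h
      exact forward_core_B U V _ _ _ hS1 hS2 (fun hh => h12 ⟨hh, rfl⟩)

lemma forward_step {Rule : Fin m → (Γ × Γ) × (Γ × Γ)}
    (hrule : ∀ i, (Rule i).1.1 = (Rule i).2.1 ∨ (Rule i).1.2 = (Rule i).2.2)
    {s t : List Γ} (h : SStep Rule s t) :
    ∃ (l : ℕ) (u : ℕ → List (Delta Γ m)),
      u 0 = psi m s ∧ u l = psi m t ∧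
      (∀ q ≤ l, (u q).length = s.length + 3 ∧ List.Chain' (ERel Rule) (u q)) ∧
      (∀ q < l, DiffOne (u q) (u (q + 1))) := by
  obtain ⟨i, U, V, hc⟩ := h
  rcases hc with ⟨rfl, rfl⟩ | ⟨rfl, rfl⟩
  · exact forward_core hrule U V _ _ _ _ (Or.inl ⟨rfl, rfl⟩) (Or.inr ⟨rfl, rfl⟩)
  · exact forward_core hrule U V _ _ _ _ (Or.inr ⟨rfl, rfl⟩) (Or.inl ⟨rfl, rfl⟩)

lemma sstep_length {Rule : Fin m → (Γ × Γ) × (Γ × Γ)} {s t : List Γ}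
    (h : SStep Rule s t) : t.length = s.length := by
  obtain ⟨i, U, V, ⟨rfl, rfl⟩ | ⟨rfl, rfl⟩⟩ := h <;> simp

lemma rtg_sstep_length {Rule : Fin m → (Γ × Γ) × (Γ × Γ)} {s t : List Γ}
    (h : Relation.ReflTransGen (SStep Rule) s t) : t.length = s.length := by
  induction h with
  | refl => rfl
  | tail h1 h2 ih => rw [sstep_length h2, ih]

lemma seq_trans {Rule : Fin m → (Γ × Γ) × (Γ × Γ)} {n : ℕ} {s t r : List Γ}
    (h1 : ∃ (l : ℕ) (u : ℕ → List (Delta Γ m)),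
      u 0 = psi m s ∧ u l = psi m t ∧
      (∀ q ≤ l, (u q).length = n + 3 ∧ List.Chain' (ERel Rule) (u q)) ∧
      (∀ q < l, DiffOne (u q) (u (q + 1))))
    (h2 : ∃ (l : ℕ) (u : ℕ → List (Delta Γ m)),
      u 0 = psi m t ∧ u l = psi m r ∧
      (∀ q ≤ l, (u q).length = n + 3 ∧ List.Chain' (ERel Rule) (u q)) ∧
      (∀ q < l, DiffOne (u q) (u (q + 1)))) :
    ∃ (l : ℕ) (u : ℕ → List (Delta Γ m)),
      u 0 = psi m s ∧ u l = psi m r ∧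
      (∀ q ≤ l, (u q).length = n + 3 ∧ List.Chain' (ERel Rule) (u q)) ∧
      (∀ q < l, DiffOne (u q) (u (q + 1))) := by
  obtain ⟨l₁, u₁, h10, h11, h1c, h1d⟩ := h1
  obtain ⟨l₂, u₂, h20, h21, h2c, h2d⟩ := h2
  refine ⟨l₁ + l₂, fun j => if j ≤ l₁ then u₁ j else u₂ (j - l₁), by simp [h10], ?_, ?_, ?_⟩
  · by_cases h : l₁ + l₂ ≤ l₁
    · obtain rfl : l₂ = 0 := by omega
      simp only [if_pos h]
      rw [show l₁ + 0 = l₁ from rfl, h11, ← h21, h20]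
    · simp only [if_neg h]
      rw [show l₁ + l₂ - l₁ = l₂ from by omega]
      exact h21
  · intro j hj
    by_cases h : j ≤ l₁
    · simp only [if_pos h]
      exact h1c j h
    · simp only [if_neg h]
      exact h2c _ (by omega)
  · intro j hj
    by_cases h : j + 1 ≤ l₁
    · have h0 : j ≤ l₁ := by omega
      simp only [if_pos h, if_pos h0]
      exact h1d j (by omega)
    · by_cases h' : j ≤ l₁
      · have hj1 : j = l₁ := by omega
        simp only [if_pos h', if_neg h]
        subst hj1
        rw [show j + 1 - j = 1 from by omega, h11, ← h20]
        exact h2d 0 (by omega)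
      · simp only [if_neg h', if_neg (show ¬ j + 1 ≤ l₁ from h)]
        rw [show j + 1 - l₁ = (j - l₁) + 1 from by omega]
        exact h2d (j - l₁) (by omega)

lemma forward_all {Rule : Fin m → (Γ × Γ) × (Γ × Γ)}
    (hrule : ∀ i, (Rule i).1.1 = (Rule i).2.1 ∨ (Rule i).1.2 = (Rule i).2.2)
    {s t : List Γ} (hn : 1 ≤ s.length)
    (h : Relation.ReflTransGen (SStep Rule) s t) :
    ∃ (l : ℕ) (u : ℕ → List (Delta Γ m)),
      u 0 = psi m s ∧ u l = psi m t ∧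
      (∀ q ≤ l, (u q).length = s.length + 3 ∧ List.Chain' (ERel Rule) (u q)) ∧
      (∀ q < l, DiffOne (u q) (u (q + 1))) := by
  induction h with
  | refl =>
    exact ⟨0, fun _ => psi m s, rfl, rfl, fun q hq => ⟨psi_length s, chain'_psi hn⟩,
      fun q hq => absurd hq (by omega)⟩
  | @tail b c h1 h2 ih =>
    refine seq_trans ih ?_
    obtain ⟨l₂, u₂, h20, h21, h2c, h2d⟩ := forward_step hrule h2
    have hb : b.length = s.length := rtg_sstep_length h1
    exact ⟨l₂, u₂, h20, h21, fun q hq => ⟨by rw [(h2c q hq).1, hb], (h2c q hq).2⟩, h2d⟩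

end Stmt11

/-- For words `s, t ∈ Γⁿ` (`n ≥ 1`): `s ⇔*_S t` iff `ψ(s)` can be transformed
into `ψ(t)` by a sequence of `H`-words over `H = (Δ, E)` of length `n + 3`,
each differing from the previous one in exactly one position. -/
theorem stmt11 {Γ : Type} [Fintype Γ] (m : ℕ)
    (Rule : Fin m → (Γ × Γ) × (Γ × Γ))
    (hrule : ∀ i, (Rule i).1.1 = (Rule i).2.1 ∨ (Rule i).1.2 = (Rule i).2.2)
    (n : ℕ) (hn : 1 ≤ n) (s t : List Γ) (hs : s.length = n) (ht : t.length = n) :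
    Relation.ReflTransGen (SStep Rule) s t ↔
      ∃ (l : ℕ) (u : ℕ → List (Delta Γ m)),
        u 0 = psi m s ∧ u l = psi m t ∧
        (∀ j ≤ l, (u j).length = n + 3 ∧ List.Chain' (ERel Rule) (u j)) ∧
        (∀ j < l, DiffOne (u j) (u (j + 1))) := by
  constructor
  · intro h
    have := Stmt11.forward_all hrule (by omega : 1 ≤ s.length) h
    rwa [hs] at this
  · rintro ⟨l, u, h0, hl, hc, hd⟩
    have key : ∀ j ≤ l, ∃ v : List Γ, v.length = n ∧ Stmt11.Inv Rule v (u j) ∧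
        Relation.ReflTransGen (SStep Rule) s v := by
      intro j
      induction j with
      | zero =>
        intro _
        refine ⟨s, hs, ?_, Relation.ReflTransGen.refl⟩
        rw [h0]
        exact Stmt11.inv_psi Rule s
      | succ j ih =>
        intro hj
        obtain ⟨v, hvlen, hvInv, hvsteps⟩ := ih (by omega)
        obtain ⟨v', hv'len, hv'Inv, hv'steps⟩ := Stmt11.step_lemma hrule (by omega) hvInv
          (hc (j+1) hj).2 (hd j (by omega))
        exact ⟨v', by rw [hv'len, hvlen], hv'Inv, hvsteps.trans hv'steps⟩
    obtain ⟨v, hvlen, hvInv, hvsteps⟩ := key l le_rfl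
    rw [hl] at hvInv
    obtain rfl := Stmt11.inv_psi_unique Rule hvInv
    exact hvsteps
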